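/- A closed term t of the lambda-calculus with shift and reset is stuck (i.e., t is not a value and admits no reduction step) if and only if t = E[Sk.t'] for some pure evaluation context E, variable k, and term t'. -/
import Mathlib


/-- Terms of the calculus λS: variables, abstractions, applications,
    shift (Sk.t) and reset (⟨t⟩). -/
inductive Tm : Type
  | var : ℕ → Tm
  | lam : ℕ → Tm → Tm
  | app : Tm → Tm → Tm
  | shift : ℕ → Tm → Tm
  | reset : Tm → Tm
deriving DecidableEq

namespace Tm

/-- Values are λ-abstractions. -/
def IsValue : Tm → Prop
  | lam _ _ => True
  | _ => False

/-- Free variables. -/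
def fv : Tm → Finset ℕ
  | var x => {x}
  | lam x t => fv t \ {x}
  | app a b => fv a ∪ fv b
  | shift k t => fv t \ {k}
  | reset t => fv t

def Closed (t : Tm) : Prop := fv t = ∅

/-- Substitution t{v/x} (substituted terms are closed values, so no
    capture can occur). -/
def subst : Tm → ℕ → Tm → Tm
  | var y, x, v => if y = x then v else var y
  | lam y t, x, v => if y = x then lam y t else lam y (subst t x v)
  | app a b, x, v => app (subst a x v) (subst b x v)
  | shift k t, x, v => if k = x then shift k t else shift k (subst t x v)
  | reset t, x, v => reset (subst t x v)

end Tm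

/-- (Evaluation) contexts F ::= [] | v F | F t | ⟨F⟩, represented outside-in.
    Pure contexts E are those with no reset constructor. -/
inductive Ctx : Type
  | hole : Ctx
  | appR : Tm → Ctx → Ctx   -- v F
  | appL : Ctx → Tm → Ctx   -- F t
  | reset : Ctx → Ctx       -- ⟨F⟩
deriving DecidableEq

namespace Ctx

def plug : Ctx → Tm → Tm
  | hole, t => t
  | appR v F, t => Tm.app v (F.plug t)
  | appL F u, t => Tm.app (F.plug t) u
  | reset F, t => Tm.reset (F.plug t)

/-- Well-formedness: in `v F` the term v must be a value. -/
def Wf : Ctx → Prop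
  | hole => True
  | appR v F => v.IsValue ∧ F.Wf
  | appL F _ => F.Wf
  | reset F => F.Wf

/-- Pure contexts contain no reset around the hole. -/
def Pure : Ctx → Prop
  | hole => True
  | appR _ F => F.Pure
  | appL F _ => F.Pure
  | reset _ => False

def fv : Ctx → Finset ℕ
  | hole => ∅
  | appR v F => v.fv ∪ F.fv
  | appL F u => F.fv ∪ u.fv
  | reset F => F.fv

/-- Context composition: (F.comp G)[t] = F[G[t]]. -/
def comp : Ctx → Ctx → Ctx
  | hole, G => G
  | appR v F, G => appR v (F.comp G)
  | appL F u, G => appL (F.comp G) u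
  | reset F, G => reset (F.comp G)

end Ctx

/-- A canonical fresh variable not occurring in the finite set s. -/
def fresh (s : Finset ℕ) : ℕ := s.sup id + 1

/-- The reduction relation →v of λS. -/
inductive Red : Tm → Tm → Prop
  | beta (F : Ctx) (x : ℕ) (t v : Tm) :
      F.Wf → v.IsValue →
      Red (F.plug (Tm.app (Tm.lam x t) v)) (F.plug (t.subst x v))
  | shift (F E : Ctx) (k : ℕ) (t : Tm) :
      F.Wf → E.Wf → E.Pure →
      Red (F.plug (Tm.reset (E.plug (Tm.shift k t))))
          (F.plug (Tm.reset (t.subst k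
            (Tm.lam (fresh E.fv) (Tm.reset (E.plug (Tm.var (fresh E.fv))))))))
  | reset (F : Ctx) (v : Tm) :
      F.Wf → v.IsValue →
      Red (F.plug (Tm.reset v)) (F.plug v)

/-- A term is stuck if it is not a value and admits no reduction step. -/
def Stuck (t : Tm) : Prop := ¬ t.IsValue ∧ ∀ t', ¬ Red t t'

/-- A normal form is a value or a stuck term. -/
def NormalForm (t : Tm) : Prop := t.IsValue ∨ Stuck t

/-- Reflexive-transitive closure of reduction. -/
def Steps : Tm → Tm → Prop := Relation.ReflTransGen Red

/-- Evaluation: t ⇓ t' when t →v* t' and t' is irreducible. -/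
def Evals (t t' : Tm) : Prop := Steps t t' ∧ ∀ u, ¬ Red t' u

/-- Redexes: (λx.t) v, ⟨E[Sk.t]⟩ with E pure, and ⟨v⟩. -/
def IsRedex (r : Tm) : Prop :=
  (∃ x t v, Tm.IsValue v ∧ r = Tm.app (Tm.lam x t) v) ∨
  (∃ E : Ctx, ∃ k t, E.Wf ∧ E.Pure ∧ r = Tm.reset (E.plug (Tm.shift k t))) ∨
  (∃ v, Tm.IsValue v ∧ r = Tm.reset v)

/-- Divergence: an infinite reduction sequence. -/
def Diverges (t : Tm) : Prop := ∃ f : ℕ → Tm, f 0 = t ∧ ∀ n, Red (f n) (f (n + 1))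

/-- Ω = (λx.x x)(λx.x x). -/
def Omega : Tm :=
  Tm.app (Tm.lam 0 (Tm.app (Tm.var 0) (Tm.var 0)))
         (Tm.lam 0 (Tm.app (Tm.var 0) (Tm.var 0)))

/-- Arbitrary one-hole contexts C. -/
inductive GCtx : Type
  | hole : GCtx
  | lam : ℕ → GCtx → GCtx
  | appL : GCtx → Tm → GCtx
  | appR : Tm → GCtx → GCtx
  | shift : ℕ → GCtx → GCtx
  | reset : GCtx → GCtx

def GCtx.plug : GCtx → Tm → Tm
  | hole, t => t
  | lam x C, t => Tm.lam x (C.plug t)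
  | appL C u, t => Tm.app (C.plug t) u
  | appR u C, t => Tm.app u (C.plug t)
  | shift k C, t => Tm.shift k (C.plug t)
  | reset C, t => Tm.reset (C.plug t)

/-- Contextual equivalence for the relaxed semantics. -/
def CtxEquiv (t0 t1 : Tm) : Prop :=
  ∀ C : GCtx, (C.plug t0).Closed → (C.plug t1).Closed →
    ((∃ v, v.IsValue ∧ Evals (C.plug t0) v) ↔ (∃ v, v.IsValue ∧ Evals (C.plug t1) v)) ∧
    ((∃ s, Stuck s ∧ Evals (C.plug t0) s) ↔ (∃ s, Stuck s ∧ Evals (C.plug t1) s))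

/-- Contextual equivalence for the original (top-level reset) semantics. -/
def CtxEquivP (t0 t1 : Tm) : Prop :=
  ∀ C : GCtx, (Tm.reset (C.plug t0)).Closed → (Tm.reset (C.plug t1)).Closed →
    ((∃ v, v.IsValue ∧ Evals (Tm.reset (C.plug t0)) v) ↔
     (∃ v, v.IsValue ∧ Evals (Tm.reset (C.plug t1)) v))

/-- The term-generating closure of a relation R on closed terms. -/
inductive TmClo (R : Tm → Tm → Prop) : Tm → Tm → Prop
  | base {t t'} : R t t' → TmClo R t t'
  | var (x : ℕ) : TmClo R (Tm.var x) (Tm.var x)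
  | lam {t t'} (x : ℕ) : TmClo R t t' → TmClo R (Tm.lam x t) (Tm.lam x t')
  | app {a a' b b'} : TmClo R a a' → TmClo R b b' →
      TmClo R (Tm.app a b) (Tm.app a' b')
  | shift {t t'} (k : ℕ) : TmClo R t t' → TmClo R (Tm.shift k t) (Tm.shift k t')
  | reset {t t'} : TmClo R t t' → TmClo R (Tm.reset t) (Tm.reset t')
lemma closed_app' {a b : Tm} (h : (Tm.app a b).Closed) : a.Closed ∧ b.Closed := by
  simpa [Tm.Closed, Tm.fv, Finset.union_eq_empty] using h

lemma pure_plug_shift_not_value (E : Ctx) (hP : E.Pure) (k : ℕ) (t' : Tm) :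
    ¬ (E.plug (Tm.shift k t')).IsValue := by
  cases E <;> simp_all [Ctx.plug, Tm.IsValue, Ctx.Pure]

lemma redex_plug_not_value (F : Ctx) (r : Tm) (hr : IsRedex r) :
    ¬ (F.plug r).IsValue := by
  cases F with
  | hole =>
    rcases hr with ⟨x, tb, v, hv, rfl⟩ | ⟨E, k, t', hE, hP, rfl⟩ | ⟨v, hv, rfl⟩ <;>
      simp [Ctx.plug, Tm.IsValue]
  | appR v F => simp [Ctx.plug, Tm.IsValue]
  | appL F u => simp [Ctx.plug, Tm.IsValue]
  | reset F => simp [Ctx.plug, Tm.IsValue]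

lemma noDecomp : ∀ (E : Ctx), E.Wf → E.Pure → ∀ (F : Ctx), F.Wf →
    ∀ (k : ℕ) (t' r : Tm), IsRedex r → E.plug (Tm.shift k t') = F.plug r → False := by
  intro E
  induction E with
  | hole =>
    intro _ _ F hF k t' r hr heq
    cases F with
    | hole =>
      simp only [Ctx.plug] at heq
      rcases hr with ⟨x, tb, v, hv, rfl⟩ | ⟨E', k2, t2, _, _, rfl⟩ | ⟨v, hv, rfl⟩ <;>
        exact Tm.noConfusion heq
    | appR v F => exact Tm.noConfusion heq
    | appL F u => exact Tm.noConfusion heq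
    | reset F => exact Tm.noConfusion heq
  | appR v E ih =>
    intro hW hP F hF k t' r hr heq
    cases F with
    | hole =>
      simp only [Ctx.plug] at heq
      rcases hr with ⟨x, tb, vv, hvv, rfl⟩ | ⟨E', k2, t2, _, _, rfl⟩ | ⟨vv, hvv, rfl⟩
      · injection heq with h1 h2
        rw [← h2] at hvv
        exact pure_plug_shift_not_value E hP k t' hvv
      · exact Tm.noConfusion heq
      · exact Tm.noConfusion heq
    | appR w F₁ =>
      injection heq with h1 h2
      exact ih hW.2 hP F₁ hF.2 k t' r hr h2
    | appL F₁ u =>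
      injection heq with h1 h2
      have hv := hW.1
      rw [h1] at hv
      exact redex_plug_not_value F₁ r hr hv
    | reset F₁ => exact Tm.noConfusion heq
  | appL E u ih =>
    intro hW hP F hF k t' r hr heq
    cases F with
    | hole =>
      simp only [Ctx.plug] at heq
      rcases hr with ⟨x, tb, vv, hvv, rfl⟩ | ⟨E', k2, t2, _, _, rfl⟩ | ⟨vv, hvv, rfl⟩
      · injection heq with h1 h2
        exact pure_plug_shift_not_value E hP k t' (by rw [h1]; trivial)
      · exact Tm.noConfusion heq
      · exact Tm.noConfusion heq
    | appR w F₁ =>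
      injection heq with h1 h2
      have hw := hF.1
      rw [← h1] at hw
      exact pure_plug_shift_not_value E hP k t' hw
    | appL F₁ u' =>
      injection heq with h1 h2
      exact ih hW hP F₁ hF k t' r hr h1
    | reset F₁ => exact Tm.noConfusion heq
  | reset E ih =>
    intro _ hP
    exact hP.elim

lemma decomp : ∀ t : Tm, t.Closed →
    t.IsValue ∨
    (∃ (F : Ctx) (r : Tm), F.Wf ∧ IsRedex r ∧ t = F.plug r) ∨
    (∃ (E : Ctx) (k : ℕ) (t' : Tm), E.Wf ∧ E.Pure ∧ t = E.plug (Tm.shift k t')) := by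
  intro t
  induction t with
  | var x => intro h; exact absurd h (by simp [Tm.Closed, Tm.fv])
  | lam x t _ => intro _; exact Or.inl trivial
  | app a b iha ihb =>
    intro h
    obtain ⟨ha, hb⟩ := closed_app' h
    rcases iha ha with hva | ⟨F, r, hF, hr, rfl⟩ | ⟨E, k, t', hE, hP, rfl⟩
    · rcases ihb hb with hvb | ⟨F, r, hF, hr, rfl⟩ | ⟨E, k, t', hE, hP, rfl⟩
      · cases a with
        | lam x tb =>
          exact Or.inr (Or.inl ⟨Ctx.hole, _, trivial, Or.inl ⟨x, tb, b, hvb, rfl⟩, rfl⟩)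
        | var y => exact hva.elim
        | app c d => exact hva.elim
        | shift k c => exact hva.elim
        | reset c => exact hva.elim
      · exact Or.inr (Or.inl ⟨Ctx.appR a F, r, ⟨hva, hF⟩, hr, rfl⟩)
      · exact Or.inr (Or.inr ⟨Ctx.appR a E, k, t', ⟨hva, hE⟩, hP, rfl⟩)
    · exact Or.inr (Or.inl ⟨Ctx.appL F b, r, hF, hr, rfl⟩)
    · exact Or.inr (Or.inr ⟨Ctx.appL E b, k, t', hE, hP, rfl⟩)
  | shift k t _ =>
    intro _
    exact Or.inr (Or.inr ⟨Ctx.hole, k, t, trivial, trivial, rfl⟩)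
  | reset s ih =>
    intro h
    have hs : s.Closed := h
    rcases ih hs with hv | ⟨F, r, hF, hr, rfl⟩ | ⟨E, k, t', hE, hP, rfl⟩
    · exact Or.inr (Or.inl ⟨Ctx.hole, _, trivial, Or.inr (Or.inr ⟨s, hv, rfl⟩), rfl⟩)
    · exact Or.inr (Or.inl ⟨Ctx.reset F, r, hF, hr, rfl⟩)
    · exact Or.inr (Or.inl ⟨Ctx.hole, _, trivial,
        Or.inr (Or.inl ⟨E, k, t', hE, hP, rfl⟩), rfl⟩)

lemma redex_red (F : Ctx) (r : Tm) (hF : F.Wf) (hr : IsRedex r) :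
    ∃ u, Red (F.plug r) u := by
  rcases hr with ⟨x, tb, v, hv, rfl⟩ | ⟨E, k, t', hE, hP, rfl⟩ | ⟨v, hv, rfl⟩
  · exact ⟨_, Red.beta F x tb v hF hv⟩
  · exact ⟨_, Red.shift F E k t' hF hE hP⟩
  · exact ⟨_, Red.reset F v hF hv⟩

lemma red_decomp {t u : Tm} (h : Red t u) :
    ∃ F r, Ctx.Wf F ∧ IsRedex r ∧ t = Ctx.plug F r := by
  cases h with
  | beta F x tb v hF hv => exact ⟨F, _, hF, Or.inl ⟨x, tb, v, hv, rfl⟩, rfl⟩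
  | shift F E k t' hF hE hP => exact ⟨F, _, hF, Or.inr (Or.inl ⟨E, k, t', hE, hP, rfl⟩), rfl⟩
  | reset F v hF hv => exact ⟨F, _, hF, Or.inr (Or.inr ⟨v, hv, rfl⟩), rfl⟩

/-- a closed term is stuck iff it is of the form E[Sk.t']
    for a pure context E. -/
theorem stuck_iff_pure_shift (t : Tm) (ht : t.Closed) :
    Stuck t ↔ ∃ (E : Ctx) (k : ℕ) (t' : Tm),
      E.Wf ∧ E.Pure ∧ t = E.plug (Tm.shift k t') := by
  constructor
  · rintro ⟨hnv, hnr⟩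
    rcases decomp t ht with hv | ⟨F, r, hF, hr, rfl⟩ | h3
    · exact absurd hv hnv
    · obtain ⟨u, hu⟩ := redex_red F r hF hr
      exact absurd hu (hnr u)
    · exact h3
  · rintro ⟨E, k, t', hE, hP, rfl⟩
    refine ⟨pure_plug_shift_not_value E hP k t', ?_⟩
    intro u hu
    obtain ⟨F, r, hF, hr, heq⟩ := red_decomp hu
    exact noDecomp E hE hP F hF k t' r hr heq
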